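/- Let n be a positive integer and let A_0, A_1, …, A_{n−1} be integers. For every positive integer i set ω_i = Σ_{j=0}^{n−1} A_j ζ_n^{ij}. Let d be a divisor of n such that ω_{d/q} = 0 for every prime power q ≠ 1 dividing d. Then ω_d ∈ d·ℤ[ζ_n]. -/

import Mathlib

open Polynomial

/-- Frobenius-type congruence: `Φ_{Mp} ≡ Φ_M ^ (p-1) (mod p)` over `ℤ`, when `p ∤ M`. -/
lemma cyclo_mul_prime_int (p M : ℕ) (hp : p.Prime) (hpM : ¬ p ∣ M) :
    ∃ u : ℤ[X], cyclotomic (M * p) ℤ = cyclotomic M ℤ ^ (p - 1) + C (p : ℤ) * u := by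
  haveI : Fact p.Prime := ⟨hp⟩
  have h := Polynomial.cyclotomic_mul_prime_eq_pow_of_not_dvd (ZMod p) hpM
  have hdvd : C (p : ℤ) ∣ (cyclotomic (M * p) ℤ - cyclotomic M ℤ ^ (p - 1)) := by
    rw [Polynomial.C_dvd_iff_dvd_coeff]
    intro i
    have hmap : ((cyclotomic (M * p) ℤ - cyclotomic M ℤ ^ (p - 1)).map
        (Int.castRingHom (ZMod p))) = 0 := by
      rw [Polynomial.map_sub, Polynomial.map_pow, map_cyclotomic_int, map_cyclotomic_int,
        h, sub_self]
    have h2 := congrArg (fun q => Polynomial.coeff q i) hmap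
    simp only [Polynomial.coeff_map, Polynomial.coeff_zero] at h2
    exact (ZMod.intCast_zmod_eq_zero_iff_dvd _ p).1 h2
  obtain ⟨u, hu⟩ := hdvd
  exact ⟨u, by rw [← hu]; ring⟩

/-- Iterated expansion: `Φ_{M·p^(j+1)}(X) = Φ_{Mp}(X^(p^j))` over `ℤ`. -/
lemma cyclo_pow_expand (p M : ℕ) (hp : p.Prime) : ∀ j : ℕ,
    cyclotomic (M * p ^ (j + 1)) ℤ = Polynomial.expand ℤ (p ^ j) (cyclotomic (M * p) ℤ) := by
  intro j
  induction j with
  | zero => simp [pow_one]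
  | succ j ih =>
      have hdvd : p ∣ M * p ^ (j + 1) :=
        Dvd.dvd.mul_left (dvd_pow_self p (Nat.succ_ne_zero j)) M
      have h1 : M * p ^ (j + 2) = (M * p ^ (j + 1)) * p := by
        rw [pow_succ]; ring
      rw [h1, ← cyclotomic_expand_eq_cyclotomic hp hdvd ℤ, ih, Polynomial.expand_expand]
      congr 1
      rw [pow_succ]; ring

theorem omega_mem_of_vanishing (n : ℕ) (hn : 0 < n) (ζ : ℂ) (hζ : IsPrimitiveRoot ζ n)
    (A : ℕ → ℤ) (ω : ℕ → ℂ)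
    (hω : ∀ i : ℕ, ω i = ∑ j ∈ Finset.range n, (A j : ℂ) * ζ ^ (i * j))
    (d : ℕ) (hd : d ∣ n)
    (hvan : ∀ p m : ℕ, p.Prime → 1 ≤ m → p ^ m ∣ d → ω (d / p ^ m) = 0) :
    ∃ r ∈ Algebra.adjoin ℤ ({ζ} : Set ℂ), ω d = (d : ℂ) * r := by
  classical
  have hd0 : 0 < d := Nat.pos_of_dvd_of_pos hd hn
  set N : ℕ := n / d with hNdef
  have hnd : d * N = n := Nat.mul_div_cancel' hd
  have hN0 : 0 < N := Nat.div_pos (Nat.le_of_dvd hn hd) hd0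
  -- the polynomial f with f(ζ^i) = ω i
  set f : ℤ[X] := ∑ j ∈ Finset.range n, C (A j) * X ^ j with hfdef
  have hfval : ∀ i : ℕ, (Polynomial.aeval ((ζ : ℂ) ^ i)) f = ω i := by
    intro i
    rw [hω i, hfdef]
    simp [pow_mul]
  -- the finite set of prime powers dividing d
  set S : Finset ℕ :=
    d.primeFactors.biUnion
      (fun p => (Finset.Icc 1 (d.factorization p)).image (p ^ ·)) with hSdef
  have hmemS : ∀ q ∈ S, ∃ p m : ℕ, p.Prime ∧ 1 ≤ m ∧ m ≤ d.factorization p ∧ q = p ^ m := by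
    intro q hq
    rw [hSdef, Finset.mem_biUnion] at hq
    obtain ⟨p, hp, hq⟩ := hq
    rw [Finset.mem_image] at hq
    obtain ⟨m, hm, rfl⟩ := hq
    rw [Finset.mem_Icc] at hm
    exact ⟨p, m, (Nat.mem_primeFactors.1 hp).1, hm.1, hm.2, rfl⟩
  -- prime powers in S divide d
  have hSdvd : ∀ p m : ℕ, p.Prime → m ≤ d.factorization p → p ^ m ∣ d := by
    intro p m hp hm
    exact (Nat.Prime.pow_dvd_iff_le_factorization hp hd0.ne').2 hm
  -- Step 1 : g := ∏_{q ∈ S} Φ_{Nq} divides f in ℤ[X]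
  set g : ℤ[X] := ∏ q ∈ S, cyclotomic (N * q) ℤ with hgdef
  have hQdvd : ∀ q ∈ S, cyclotomic (N * q) ℚ ∣ f.map (Int.castRingHom ℚ) := by
    intro q hq
    obtain ⟨p, m, hp, hm1, hm2, rfl⟩ := hmemS q hq
    have hqd : p ^ m ∣ d := hSdvd p m hp hm2
    set e : ℕ := d / p ^ m with hedef
    have hed : e * p ^ m = d := Nat.div_mul_cancel hqd
    have hprim : IsPrimitiveRoot (ζ ^ e) (N * p ^ m) := by
      refine hζ.pow hn ?_
      rw [← hnd, ← hed]; ring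
    have hNq0 : 0 < N * p ^ m := Nat.mul_pos hN0 (pow_pos hp.pos m)
    have haeval : (Polynomial.aeval ((ζ : ℂ) ^ e)) (f.map (Int.castRingHom ℚ)) = 0 := by
      rw [show (Int.castRingHom ℚ) = algebraMap ℤ ℚ from rfl,
        Polynomial.aeval_map_algebraMap, hfval e, hedef]
      exact hvan p m hp hm1 hqd
    rw [cyclotomic_eq_minpoly_rat hprim hNq0]
    exact minpoly.dvd ℚ _ haeval
  have hcop : (↑S : Set ℕ).Pairwise (Function.onFun IsCoprime
      (fun q => cyclotomic (N * q) ℚ)) := by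
    intro a _ b _ hab
    refine Polynomial.cyclotomic.isCoprime_rat (fun h => hab ?_)
    exact Nat.eq_of_mul_eq_mul_left hN0 h
  have hgQ : (∏ q ∈ S, cyclotomic (N * q) ℚ) ∣ f.map (Int.castRingHom ℚ) :=
    Finset.prod_dvd_of_coprime hcop hQdvd
  have hgmonic : g.Monic := monic_prod_of_monic _ _ (fun q _ => cyclotomic.monic _ ℤ)
  have hgf : g ∣ f := by
    rw [← Polynomial.map_dvd_map (Int.castRingHom ℚ) Int.cast_injective hgmonic]
    have : g.map (Int.castRingHom ℚ) = ∏ q ∈ S, cyclotomic (N * q) ℚ := by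
      rw [hgdef, Polynomial.map_prod]
      exact Finset.prod_congr rfl (fun q _ => map_cyclotomic_int _ ℚ)
    rw [this]
    exact hgQ
  -- the subalgebra T = ℤ[ζ]
  set T := Algebra.adjoin ℤ ({ζ} : Set ℂ) with hTdef
  set z : T := ⟨ζ, Algebra.self_mem_adjoin_singleton ℤ ζ⟩ with hzdef
  have hzcoe : (T.val) z = ζ := rfl
  -- Step 2 : for each q ∈ S, p = minFac q divides Φ_{Nq}(ζ^d) in T
  have hstep : ∀ q ∈ S,
      ((q.minFac : T)) ∣ (Polynomial.aeval (z ^ d)) (cyclotomic (N * q) ℤ) := by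
    intro q hq
    obtain ⟨p, m, hp, hm1, hm2, rfl⟩ := hmemS q hq
    have hpmin : (p ^ m).minFac = p := hp.pow_minFac (by omega)
    rw [hpmin]
    set b : ℕ := N.factorization p with hbdef
    set M : ℕ := N / p ^ b with hMdef
    have hbM : p ^ b * M = N := Nat.ordProj_mul_ordCompl_eq_self N p
    have hpM : ¬ p ∣ M := Nat.not_dvd_ordCompl hp hN0.ne'
    have hNq : N * p ^ m = M * p ^ (b + m) := by
      rw [← hbM, pow_add]; ring
    have hbm : b + m = (b + m - 1) + 1 := by omega
    rw [hNq, hbm, cyclo_pow_expand p M hp (b + m - 1), Polynomial.expand_aeval]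
    obtain ⟨u, hu⟩ := cyclo_mul_prime_int p M hp hpM
    rw [hu, map_add, map_mul, map_pow, aeval_C]
    -- the evaluation point is a primitive M-th root of unity, so Φ_M vanishes there
    have hy : (Polynomial.aeval ((z ^ d) ^ p ^ (b + m - 1))) (cyclotomic M ℤ) = 0 := by
      have hM0 : 0 < M := Nat.ordCompl_pos p hN0.ne'
      have hprim1 : IsPrimitiveRoot ((ζ : ℂ) ^ (d * p ^ b)) M := by
        refine hζ.pow hn ?_
        rw [← hnd, ← hbM]; ring
      have hcoprime : (p ^ (m - 1)).Coprime M :=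
        Nat.Coprime.pow_left _ (hp.coprime_iff_not_dvd.2 hpM)
      have hprim2 : IsPrimitiveRoot (((ζ : ℂ) ^ (d * p ^ b)) ^ p ^ (m - 1)) M :=
        hprim1.pow_of_coprime _ hcoprime
      have hexp : ((ζ : ℂ) ^ d) ^ p ^ (b + m - 1) = ((ζ : ℂ) ^ (d * p ^ b)) ^ p ^ (m - 1) := by
        rw [← pow_mul, ← pow_mul]
        congr 1
        rw [show b + m - 1 = b + (m - 1) by omega, pow_add]; ring
      have hC : (Polynomial.aeval (((ζ : ℂ) ^ d) ^ p ^ (b + m - 1))) (cyclotomic M ℤ) = 0 := by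
        rw [hexp]
        have := hprim2.isRoot_cyclotomic hM0 (R := ℂ)
        rw [Polynomial.IsRoot] at this
        rw [Polynomial.aeval_def, ← Polynomial.eval_map, show algebraMap ℤ ℂ =
          Int.castRingHom ℂ from rfl, map_cyclotomic_int]
        exact this
      rw [← hzcoe] at hC
      have hcomm := Polynomial.aeval_algHom_apply T.val ((z ^ d) ^ p ^ (b + m - 1))
        (cyclotomic M ℤ)
      simp only [map_pow] at hcomm
      have hzero : T.val ((Polynomial.aeval ((z ^ d) ^ p ^ (b + m - 1))) (cyclotomic M ℤ)) = 0 := by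
        rw [← hcomm]; exact hC
      exact Subtype.coe_injective (by simpa using hzero)
    rw [hy, zero_pow (Nat.sub_ne_zero_of_lt hp.one_lt), zero_add]
    exact ⟨(Polynomial.aeval ((z ^ d) ^ p ^ (b + m - 1))) u, by push_cast; ring⟩
  -- Step 3 : the product of the minimal primes over S is d
  have hprodS : ∏ q ∈ S, q.minFac = d := by
    have hdisj : (↑d.primeFactors : Set ℕ).PairwiseDisjoint
        (fun p => (Finset.Icc 1 (d.factorization p)).image (p ^ ·)) := by
      intro p₁ hp₁ p₂ hp₂ hne
      have hp₁' := (Nat.mem_primeFactors.1 (by exact_mod_cast hp₁)).1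
      have hp₂' := (Nat.mem_primeFactors.1 (by exact_mod_cast hp₂)).1
      refine Finset.disjoint_left.2 ?_
      intro q hq1 hq2
      rw [Finset.mem_image] at hq1 hq2
      obtain ⟨m₁, hm₁, rfl⟩ := hq1
      obtain ⟨m₂, hm₂, heq⟩ := hq2
      rw [Finset.mem_Icc] at hm₁ hm₂
      apply hne
      have h1 : p₂ ∣ p₁ ^ m₁ := heq ▸ dvd_pow_self p₂ (by omega)
      exact ((Nat.prime_dvd_prime_iff_eq hp₂' hp₁').1 (hp₂'.dvd_of_dvd_pow h1)).symm
    rw [hSdef, Finset.prod_biUnion hdisj]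
    have hinner : ∀ p ∈ d.primeFactors,
        (∏ q ∈ (Finset.Icc 1 (d.factorization p)).image (p ^ ·), q.minFac)
          = p ^ d.factorization p := by
      intro p hp
      have hp' := (Nat.mem_primeFactors.1 hp).1
      rw [Finset.prod_image (fun a _ b _ h => Nat.pow_right_injective hp'.two_le h)]
      have : ∀ m ∈ Finset.Icc 1 (d.factorization p), (p ^ m).minFac = p := by
        intro m hm
        rw [Finset.mem_Icc] at hm
        exact hp'.pow_minFac (by omega)
      rw [Finset.prod_congr rfl this, Finset.prod_const, Nat.card_Icc, Nat.add_sub_cancel]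
    rw [Finset.prod_congr rfl hinner]
    conv_rhs => rw [← Nat.factorization_prod_pow_eq_self hd0.ne']
    rfl
  -- Step 4 : assemble
  obtain ⟨h, hfgh⟩ := hgf
  have h1 : (Polynomial.aeval (z ^ d)) f
      = (∏ q ∈ S, (Polynomial.aeval (z ^ d)) (cyclotomic (N * q) ℤ))
        * (Polynomial.aeval (z ^ d)) h := by
    rw [hfgh, map_mul, hgdef, map_prod]
  have h2 : ((d : T)) ∣ ∏ q ∈ S, (Polynomial.aeval (z ^ d)) (cyclotomic (N * q) ℤ) := by
    have hdd : (∏ q ∈ S, ((q.minFac : T)))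
        ∣ ∏ q ∈ S, (Polynomial.aeval (z ^ d)) (cyclotomic (N * q) ℤ) :=
      Finset.prod_dvd_prod_of_dvd _ _ hstep
    have : ((d : T)) = ∏ q ∈ S, ((q.minFac : T)) := by
      rw [← Nat.cast_prod, hprodS]
    rw [this]
    exact hdd
  have h3 : ((d : T)) ∣ (Polynomial.aeval (z ^ d)) f := by
    rw [h1]
    exact Dvd.dvd.mul_right h2 _
  obtain ⟨r, hr⟩ := h3
  refine ⟨(r : ℂ), r.2, ?_⟩
  have hval : ω d = (T.val) ((Polynomial.aeval (z ^ d)) f) := by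
    rw [← hfval d]
    have hcomm := Polynomial.aeval_algHom_apply T.val (z ^ d) f
    simp only [map_pow, hzcoe] at hcomm
    exact hcomm
  rw [hval, hr, map_mul, map_natCast]
  rfl
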